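/- Let K be a C-pseudo-cone in ℝⁿ that is smooth and strictly convex inside int C, and let F = -h_{K*} restricted to int C be its gauge function, which is differentiable on int C. Then for every x ∈ ∂K ∩ int C, the pair (x, -∇(½F²)(x)) is a crucial pair of K; that is, -∇(½F²)(x) is an outer normal vector of K at x and ⟨x, -∇(½F²)(x)⟩ = -1. -/

import Mathlib

open Set Pointwise RealInnerProductSpace

noncomputable section

/-- The support function of a set `K ⊆ ℝⁿ`, with values in `ℝ ∪ {∞} ⊆ EReal`. -/
def supportFn {n : ℕ} (K : Set (EuclideanSpace ℝ (Fin n))) (u : EuclideanSpace ℝ (Fin n)) :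
    EReal :=
  sSup ((fun x => ((⟪u, x⟫ : ℝ) : EReal)) '' K)

/-- The copolar set `K* = {u : ⟨u,x⟩ ≤ -1 for all x ∈ K}`. -/
def copolar {n : ℕ} (K : Set (EuclideanSpace ℝ (Fin n))) : Set (EuclideanSpace ℝ (Fin n)) :=
  {u | ∀ x ∈ K, ⟪u, x⟫ ≤ (-1 : ℝ)}

/-- The dual cone `C° = {u : ⟨u,x⟩ ≤ 0 for all x ∈ C}`. -/
def dualCone {n : ℕ} (C : Set (EuclideanSpace ℝ (Fin n))) : Set (EuclideanSpace ℝ (Fin n)) :=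
  {u | ∀ x ∈ C, ⟪u, x⟫ ≤ (0 : ℝ)}

/-- The recession cone of `K`. -/
def recessionCone {n : ℕ} (K : Set (EuclideanSpace ℝ (Fin n))) :
    Set (EuclideanSpace ℝ (Fin n)) :=
  {y | ∀ x ∈ K, ∀ t : ℝ, 0 ≤ t → x + t • y ∈ K}

/-- A pseudo-cone: a nonempty closed convex set with `0 ∉ K` and `λK ⊆ K` for `λ ≥ 1`. -/
def IsPseudoCone {n : ℕ} (K : Set (EuclideanSpace ℝ (Fin n))) : Prop :=
  K.Nonempty ∧ IsClosed K ∧ Convex ℝ K ∧ (0 : EuclideanSpace ℝ (Fin n)) ∉ K ∧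
    ∀ lam : ℝ, 1 ≤ lam → lam • K ⊆ K

/-- A pointed closed convex cone with nonempty interior. -/
def IsPointedSolidClosedCone {n : ℕ} (C : Set (EuclideanSpace ℝ (Fin n))) : Prop :=
  IsClosed C ∧ Convex ℝ C ∧ (∀ lam : ℝ, 0 ≤ lam → lam • C ⊆ C) ∧
    (interior C).Nonempty ∧ C ∩ (-C) = {0}

/-- A `C`-pseudo-cone: a pseudo-cone whose recession cone is `C`, where `C` is a
pointed closed convex cone with nonempty interior. -/
def IsCPseudoCone {n : ℕ} (C K : Set (EuclideanSpace ℝ (Fin n))) : Prop :=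
  IsPointedSolidClosedCone C ∧ IsPseudoCone K ∧ recessionCone K = C

/-- `H` is a supporting hyperplane of `K`: `H = {y : ⟨u,y⟩ = c}` for some `u ≠ 0`, with
`K` on the side `⟨u,·⟩ ≤ c` and `H` touching `K`. -/
def IsSuppHyperplane {n : ℕ} (K H : Set (EuclideanSpace ℝ (Fin n))) : Prop :=
  ∃ (u : EuclideanSpace ℝ (Fin n)) (c : ℝ), u ≠ 0 ∧ H = {y | ⟪u, y⟫ = c} ∧
    (∀ y ∈ K, ⟪u, y⟫ ≤ c) ∧ ∃ y ∈ K, ⟪u, y⟫ = c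

/-- `K` is smooth inside `int C`: each boundary point of `K` lying in `int C` is contained
in a unique supporting hyperplane of `K`. -/
def SmoothInside {n : ℕ} (K C : Set (EuclideanSpace ℝ (Fin n))) : Prop :=
  ∀ x ∈ frontier K ∩ interior C,
    ∃! H : Set (EuclideanSpace ℝ (Fin n)), IsSuppHyperplane K H ∧ x ∈ H

/-- `K` is strictly convex inside `int C`: each boundary point of `K` lying in `int C`
admits a supporting hyperplane meeting `K` only in that point. -/
def StrictlyConvexInside {n : ℕ} (K C : Set (EuclideanSpace ℝ (Fin n))) : Prop :=
  ∀ x ∈ frontier K ∩ interior C,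
    ∃ H : Set (EuclideanSpace ℝ (Fin n)), IsSuppHyperplane K H ∧ H ∩ K = {x}

/-- `(x, xs)` is a crucial pair of `K`: `x ∈ ∂K`, `xs` is an outer normal vector of `K`
at `x`, and `⟨x, xs⟩ = -1`. -/
def IsCrucialPair {n : ℕ} (K : Set (EuclideanSpace ℝ (Fin n)))
    (x xs : EuclideanSpace ℝ (Fin n)) : Prop :=
  x ∈ frontier K ∧ (∀ y ∈ K, ⟪xs, y - x⟫ ≤ (0 : ℝ)) ∧ ⟪x, xs⟫ = (-1 : ℝ)

/-- Let `K` be a `C`-pseudo-cone, smooth and strictly convex inside `int C`,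
with gauge function `F = -h_{K*}` on `int C`. Then for every `x ∈ ∂K ∩ int C`,
the pair `(x, -∇(½F²)(x))` is a crucial pair of `K`. -/
theorem crucialPair_gradient {n : ℕ}
    (C K : Set (EuclideanSpace ℝ (Fin n))) (hK : IsCPseudoCone C K)
    (hsm : SmoothInside K C) (hsc : StrictlyConvexInside K C) :
    ∀ x ∈ frontier K ∩ interior C,
      IsCrucialPair K x
        (-(gradient (fun y =>
          (1 / 2) * (-(supportFn (copolar K) y).toReal) ^ 2) x)) := by
  obtain ⟨⟨hCcl, hCcv, hCcone, hCint, hCpt⟩, ⟨hKne, hKcl, hKcv, hK0, hKsc⟩, hrec⟩ := hK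
  intro x hx
  obtain ⟨hxF, hxC⟩ := hx
  have hxK : x ∈ K := hKcl.frontier_subset hxF
  -- dual cone property of the copolar
  have hdual : ∀ u ∈ copolar K, ∀ z ∈ C, ⟪u, z⟫ ≤ (0:ℝ) := by
    intro u hu z hz
    by_contra h
    push_neg at h
    have hz' : z ∈ recessionCone K := hrec ▸ hz
    have hux : ⟪u, x⟫ ≤ -1 := hu x hxK
    have ht : (0:ℝ) ≤ (-⟪u, x⟫) / ⟪u, z⟫ := div_nonneg (by linarith) h.le
    have hmem := hu _ (hz' x hxK _ ht)
    rw [inner_add_right, real_inner_smul_right, div_mul_cancel₀ _ (ne_of_gt h)] at hmem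
    linarith
  -- a ball around x inside the interior of C
  obtain ⟨ε, hε, hball⟩ := Metric.isOpen_iff.1 isOpen_interior x hxC
  set δ : ℝ := ε / 2 with hδdef
  have hδ : 0 < δ := by positivity
  have hball2 : Metric.ball x (2 * δ) ⊆ C := by
    intro p hp
    refine interior_subset (hball ?_)
    rw [Metric.mem_ball] at hp ⊢
    rw [hδdef] at hp
    linarith
  -- norm bound on copolar elements, uniformly near x
  have hnb : ∀ y ∈ Metric.ball x δ, ∀ u ∈ copolar K, δ * ‖u‖ ≤ -⟪u, y⟫ := by
    intro y hy u hu
    rcases eq_or_ne u 0 with rfl | hu0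
    · simp
    have hun : (0:ℝ) < ‖u‖ := norm_pos_iff.2 hu0
    have hp : y + (δ / ‖u‖) • u ∈ Metric.ball x (2 * δ) := by
      rw [Metric.mem_ball] at hy ⊢
      calc dist (y + (δ / ‖u‖) • u) x ≤ dist (y + (δ / ‖u‖) • u) y + dist y x :=
            dist_triangle _ _ _
        _ < 2 * δ := by
            have : dist (y + (δ / ‖u‖) • u) y = δ := by
              rw [dist_eq_norm, add_sub_cancel_left, norm_smul, norm_div, Real.norm_eq_abs,
                abs_of_pos hδ, Real.norm_eq_abs, abs_of_pos hun, div_mul_cancel₀ _ hun.ne']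
            linarith
    have := hdual u hu _ (hball2 hp)
    rw [inner_add_right, real_inner_smul_right, real_inner_self_eq_norm_sq] at this
    have h2 : δ / ‖u‖ * ‖u‖ ^ 2 = δ * ‖u‖ := by field_simp
    linarith [h2 ▸ this]
  -- the supporting hyperplane at x and the normalized normal vector ustar
  obtain ⟨H, ⟨⟨u, cH, hu0, hHeq, hKs, y₀, hy₀K, hy₀⟩, hxH⟩, hHuniq⟩ := hsm x ⟨hxF, hxC⟩
  have hxcH : ⟪u, x⟫ = cH := by rw [hHeq] at hxH; exact hxH
  have hcH0 : cH ≤ 0 := by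
    have h2 : (2:ℝ) • x ∈ K := hKsc 2 one_le_two ⟨x, hxK, rfl⟩
    have := hKs _ h2
    rw [real_inner_smul_right, hxcH] at this
    linarith
  have hucone : ∀ z ∈ C, ⟪u, z⟫ ≤ (0:ℝ) := by
    intro z hz
    by_contra h
    push_neg at h
    have hz' : z ∈ recessionCone K := hrec ▸ hz
    have huy : ⟪u, y₀⟫ ≤ cH := hKs _ hy₀K
    have ht : (0:ℝ) ≤ (cH - ⟪u, y₀⟫ + 1) / ⟪u, z⟫ := div_nonneg (by linarith) h.le
    have hmem := hKs _ (hz' y₀ hy₀K _ ht)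
    rw [inner_add_right, real_inner_smul_right, div_mul_cancel₀ _ (ne_of_gt h)] at hmem
    linarith
  have hcHlt : cH < 0 := by
    rcases lt_or_eq_of_le hcH0 with h | h
    · exact h
    exfalso
    have hun : (0:ℝ) < ‖u‖ := norm_pos_iff.2 hu0
    have hp : x + (δ / ‖u‖) • u ∈ Metric.ball x (2 * δ) := by
      rw [Metric.mem_ball, dist_eq_norm, add_sub_cancel_left, norm_smul, Real.norm_eq_abs,
        abs_of_pos (div_pos hδ hun)]
      rw [div_mul_cancel₀ _ hun.ne']
      linarith
    have := hucone _ (hball2 hp)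
    rw [inner_add_right, real_inner_smul_right, real_inner_self_eq_norm_sq, hxcH, ← h] at this
    have h2 : δ / ‖u‖ * ‖u‖ ^ 2 = δ * ‖u‖ := by field_simp
    nlinarith
  set ustar : EuclideanSpace ℝ (Fin n) := (-cH)⁻¹ • u with hustardef
  have hcinv : (0:ℝ) < (-cH)⁻¹ := inv_pos.2 (by linarith)
  have hsmem : ustar ∈ copolar K := by
    intro y hy
    have h1 : ⟪u, y⟫ ≤ cH := hKs y hy
    rw [hustardef, real_inner_smul_left]
    calc (-cH)⁻¹ * ⟪u, y⟫ ≤ (-cH)⁻¹ * cH := by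
          exact mul_le_mul_of_nonneg_left h1 hcinv.le
      _ = -1 := by
          rw [inv_mul_eq_div, div_neg, div_self hcHlt.ne]
  have hsx : ⟪ustar, x⟫ = -1 := by
    rw [hustardef, real_inner_smul_left, hxcH, inv_mul_eq_div, div_neg, div_self hcHlt.ne]
  have hust0 : ustar ≠ 0 := by
    intro h
    rw [h, inner_zero_left] at hsx
    norm_num at hsx
  -- real-valuedness of the support function near x
  set S : EuclideanSpace ℝ (Fin n) → EReal := supportFn (copolar K) with hSdef
  have hSfacts : ∀ y ∈ Metric.ball x δ, S y ≠ ⊤ ∧ S y ≠ ⊥ ∧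
      ⟪ustar, y⟫ ≤ (S y).toReal ∧ ∀ u' ∈ copolar K, ⟪u', y⟫ ≤ (S y).toReal := by
    intro y hy
    have hSub : S y ≤ ((0:ℝ) : EReal) := by
      apply sSup_le
      rintro a ⟨u', hu', rfl⟩
      rw [EReal.coe_le_coe_iff, real_inner_comm]
      have := hnb y hy u' hu'
      nlinarith [mul_nonneg hδ.le (norm_nonneg u')]
    have hSlb : ((⟪y, ustar⟫ : ℝ) : EReal) ≤ S y := le_sSup ⟨ustar, hsmem, rfl⟩
    have htop : S y ≠ ⊤ := fun h => by simp [h] at hSub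
    have hbot : S y ≠ ⊥ := fun h => by simp [h] at hSlb
    refine ⟨htop, hbot, ?_, ?_⟩
    · have := EReal.toReal_le_toReal hSlb (EReal.coe_ne_bot _) htop
      rw [real_inner_comm]
      simpa using this
    · intro u' hu'
      have h1 : ((⟪y, u'⟫ : ℝ) : EReal) ≤ S y := le_sSup ⟨u', hu', rfl⟩
      have := EReal.toReal_le_toReal h1 (EReal.coe_ne_bot _) htop
      rw [real_inner_comm]
      simpa using this
  -- value at x
  have hSx : (S x).toReal = -1 := by
    have hxball : x ∈ Metric.ball x δ := Metric.mem_ball_self hδ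
    obtain ⟨htop, hbot, hlb, -⟩ := hSfacts x hxball
    have h1 : S x ≤ (((-1:ℝ)) : EReal) := by
      apply sSup_le
      rintro a ⟨u', hu', rfl⟩
      rw [EReal.coe_le_coe_iff, real_inner_comm]
      exact hu' x hxK
    have h2 := EReal.toReal_le_toReal h1 hbot (EReal.coe_ne_top _)
    rw [EReal.toReal_coe] at h2
    rw [hsx] at hlb
    linarith
  set Fr : EuclideanSpace ℝ (Fin n) → ℝ := fun y => -(supportFn (copolar K) y).toReal
    with hFrdef
  have hFrx : Fr x = 1 := by rw [hFrdef]; simp only [← hSdef, hSx]; norm_num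
  -- the gradient of Fr at x is -ustar
  have hgrad : HasGradientAt Fr (-ustar) x := by
    rw [hasGradientAt_iff_isLittleO, Asymptotics.isLittleO_iff]
    intro c hc
    have hupper : ∀ y ∈ Metric.ball x δ, Fr y - Fr x - ⟪-ustar, y - x⟫ ≤ 0 := by
      intro y hy
      obtain ⟨-, -, hlb, -⟩ := hSfacts y hy
      rw [hFrx, inner_neg_left, inner_sub_right, hsx, hFrdef]
      simp only [← hSdef]
      linarith
    have hlow : ∀ᶠ y in nhds x, -(c * ‖y - x‖) ≤ Fr y - Fr x - ⟪-ustar, y - x⟫ := by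
      by_contra hcon
      rw [Filter.not_eventually] at hcon
      have hseq : ∀ k : ℕ, ∃ y, (y ∈ Metric.ball x (min δ (1/(k+1))) ∧
          Fr y - Fr x - ⟪-ustar, y - x⟫ < -(c * ‖y - x‖)) := by
        intro k
        have hmem : Metric.ball x (min δ (1/(k+1))) ∈ nhds x :=
          Metric.ball_mem_nhds _ (lt_min hδ (by positivity))
        obtain ⟨y, hy1, hy2⟩ := (hcon.and_eventually hmem).exists
        exact ⟨y, hy2, not_le.1 (fun hle => hy1 hle)⟩
      choose y hyb hybad using hseq
      have hyball : ∀ k, y k ∈ Metric.ball x δ := fun k =>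
        Metric.ball_subset_ball (min_le_left _ _) (hyb k)
      have hrpos : ∀ k, 0 < ‖y k - x‖ := by
        intro k
        rcases eq_or_lt_of_le (norm_nonneg (y k - x)) with h | h
        · exfalso
          have hyx : y k = x := by
            have := sub_eq_zero.1 (norm_eq_zero.1 h.symm)
            exact this
          have := hybad k
          rw [hyx] at this
          simp at this
        · exact h
      have hrlt : ∀ k, ‖y k - x‖ < 1/(k+1) := by
        intro k
        have := hyb k
        rw [Metric.mem_ball, dist_eq_norm] at this
        exact lt_of_lt_of_le this (min_le_right _ _)
      have hrδ : ∀ k, ‖y k - x‖ < δ := by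
        intro k
        have := hyball k
        rwa [Metric.mem_ball, dist_eq_norm] at this
      -- choose near-maximizers
      have hukex : ∀ k, ∃ uk ∈ copolar K,
          (S (y k)).toReal - c * ‖y k - x‖ / 2 < ⟪uk, y k⟫ := by
        intro k
        obtain ⟨htop, hbot, -, -⟩ := hSfacts (y k) (hyball k)
        have heq : S (y k) = (((S (y k)).toReal : ℝ) : EReal) :=
          (EReal.coe_toReal htop hbot).symm
        have hlt : (((S (y k)).toReal - c * ‖y k - x‖ / 2 : ℝ) : EReal) < S (y k) := by
          conv_rhs => rw [heq]
          rw [EReal.coe_lt_coe_iff]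
          nlinarith [hrpos k, hc]
        obtain ⟨a, ⟨uk, hukmem, rfl⟩, hlt2⟩ := lt_sSup_iff.1 hlt
        refine ⟨uk, hukmem, ?_⟩
        rw [EReal.coe_lt_coe_iff] at hlt2
        rw [real_inner_comm]
        exact hlt2
      choose uu huumem huugt using hukex
      -- inequalities
      set M : ℝ := (‖ustar‖ * (‖x‖ + δ) + c * δ) / δ with hMdef
      have hbadr : ∀ k, ⟪ustar, y k⟫ + c * ‖y k - x‖ < (S (y k)).toReal := by
        intro k
        have := hybad k
        rw [hFrx, inner_neg_left, inner_sub_right, hsx, hFrdef] at this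
        simp only [← hSdef] at this
        linarith
      have hukyk : ∀ k, ⟪uu k, y k⟫ ≤ (S (y k)).toReal := fun k =>
        (hSfacts (y k) (hyball k)).2.2.2 (uu k) (huumem k)
      have hnormuk : ∀ k, ‖uu k‖ ≤ M := by
        intro k
        have h1 := hnb (y k) (hyball k) (uu k) (huumem k)
        have h2 := huugt k
        have h3 := hbadr k
        have h4 : -(‖ustar‖ * ‖y k‖) ≤ ⟪ustar, y k⟫ := by
          have := real_inner_le_norm ustar (-(y k))
          rw [inner_neg_right, norm_neg] at this
          linarith
        have h5 : ‖y k‖ ≤ ‖x‖ + δ := by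
          have h6 : ‖y k‖ ≤ ‖y k - x‖ + ‖x‖ := by
            calc ‖y k‖ = ‖(y k - x) + x‖ := by rw [sub_add_cancel]
              _ ≤ ‖y k - x‖ + ‖x‖ := norm_add_le _ _
          linarith [hrδ k]
        have hr := hrpos k
        have hrd := hrδ k
        rw [hMdef, le_div_iff₀ hδ]
        have hustnn : (0:ℝ) ≤ ‖ustar‖ := norm_nonneg _
        nlinarith
      have hMnn : (0:ℝ) ≤ M := le_trans (norm_nonneg _) (hnormuk 0)
      have hukxle : ∀ k, ⟪uu k, x⟫ ≤ -1 := fun k => huumem k x hxK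
      have hukxge : ∀ k, -1 - (‖ustar‖ + M + c) * ‖y k - x‖ ≤ ⟪uu k, x⟫ := by
        intro k
        have h2 := huugt k
        have h3 := hbadr k
        have h6 : ⟪uu k, x⟫ = ⟪uu k, y k⟫ - ⟪uu k, y k - x⟫ := by
          rw [inner_sub_right]; ring
        have h7 : ⟪uu k, y k - x⟫ ≤ M * ‖y k - x‖ :=
          le_trans (real_inner_le_norm _ _)
            (mul_le_mul_of_nonneg_right (hnormuk k) (norm_nonneg _))
        have h8 : ⟪ustar, y k⟫ = ⟪ustar, x⟫ + ⟪ustar, y k - x⟫ := by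
          rw [inner_sub_right]; ring
        have h9 : -(‖ustar‖ * ‖y k - x‖) ≤ ⟪ustar, y k - x⟫ := by
          have := real_inner_le_norm ustar (-(y k - x))
          rw [inner_neg_right, norm_neg] at this
          linarith
        rw [hsx] at h8
        have hexp : (‖ustar‖ + M + c) * ‖y k - x‖
            = ‖ustar‖ * ‖y k - x‖ + M * ‖y k - x‖ + c * ‖y k - x‖ := by ring
        have hcr : (0:ℝ) ≤ c * ‖y k - x‖ := mul_nonneg hc.le (norm_nonneg _)
        linarith
      have hgap : ∀ k, c / 2 ≤ ‖uu k - ustar‖ := by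
        intro k
        have h2 := huugt k
        have h3 := hbadr k
        have h5 : ⟪uu k - ustar, y k - x⟫ ≤ ‖uu k - ustar‖ * ‖y k - x‖ :=
          real_inner_le_norm _ _
        have h6 : ⟪uu k - ustar, y k - x⟫
            = ⟪uu k, y k⟫ - ⟪uu k, x⟫ - ⟪ustar, y k⟫ + ⟪ustar, x⟫ := by
          rw [inner_sub_left, inner_sub_right, inner_sub_right]; ring
        rw [hsx] at h6
        have h7 := hukxle k
        have hr := hrpos k
        have hmul : c / 2 * ‖y k - x‖ ≤ ‖uu k - ustar‖ * ‖y k - x‖ := by linarith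
        exact le_of_mul_le_mul_right hmul hr
      obtain ⟨ub, -, φ, hφmono, hφtend⟩ :=
        (isCompact_closedBall (0 : EuclideanSpace ℝ (Fin n)) M).tendsto_subseq
          (fun k => Metric.mem_closedBall.2 (by simpa [dist_zero_right] using hnormuk k))
      have htendr : Filter.Tendsto (fun j => ‖y (φ j) - x‖) Filter.atTop (nhds 0) := by
        apply squeeze_zero (fun j => norm_nonneg _) (g := fun j : ℕ => 1 / (j + 1))
        · intro j
          refine (hrlt (φ j)).le.trans ?_
          apply one_div_le_one_div_of_le (by positivity)
          have : (j:ℝ) ≤ (φ j : ℝ) := by exact_mod_cast hφmono.le_apply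
          linarith
        · exact tendsto_one_div_add_atTop_nhds_zero_nat
      have htendinner : Filter.Tendsto (fun j => ⟪uu (φ j), x⟫) Filter.atTop (nhds ⟪ub, x⟫) :=
        hφtend.inner tendsto_const_nhds
      have hubx : ⟪ub, x⟫ = -1 := by
        have hle : ⟪ub, x⟫ ≤ -1 :=
          le_of_tendsto htendinner (Filter.Eventually.of_forall fun j => hukxle (φ j))
        have htend2 : Filter.Tendsto (fun j => -1 - (‖ustar‖ + M + c) * ‖y (φ j) - x‖)
            Filter.atTop (nhds (-1)) := by
          have h1 := htendr.const_mul (‖ustar‖ + M + c)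
          have h2 := (tendsto_const_nhds (x := (-1:ℝ)) (f := Filter.atTop (α := ℕ))).sub h1
          simpa using h2
        have hge : -1 ≤ ⟪ub, x⟫ :=
          le_of_tendsto_of_tendsto' htend2 htendinner (fun j => hukxge (φ j))
        linarith
      have hubgap : c / 2 ≤ ‖ub - ustar‖ := by
        have htn : Filter.Tendsto (fun j => ‖uu (φ j) - ustar‖) Filter.atTop
            (nhds ‖ub - ustar‖) := (hφtend.sub tendsto_const_nhds).norm
        exact le_of_tendsto_of_tendsto' tendsto_const_nhds htn (fun j => hgap (φ j))
      have hubmem : ub ∈ copolar K := by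
        intro w hw
        have htn : Filter.Tendsto (fun j => ⟪uu (φ j), w⟫) Filter.atTop (nhds ⟪ub, w⟫) :=
          hφtend.inner tendsto_const_nhds
        exact le_of_tendsto htn (Filter.Eventually.of_forall fun j => huumem (φ j) w hw)
      have hub0 : ub ≠ 0 := by
        intro h
        rw [h, inner_zero_left] at hubx
        norm_num at hubx
      have hH1 : ({z | ⟪ustar, z⟫ = (-1:ℝ)} : Set (EuclideanSpace ℝ (Fin n))) = H :=
        hHuniq _ ⟨⟨ustar, -1, hust0, rfl, fun z hz => hsmem z hz, ⟨x, hxK, hsx⟩⟩, hsx⟩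
      have hH2 : ({z | ⟪ub, z⟫ = (-1:ℝ)} : Set (EuclideanSpace ℝ (Fin n))) = H :=
        hHuniq _ ⟨⟨ub, -1, hub0, rfl, fun z hz => hubmem z hz, ⟨x, hxK, hubx⟩⟩, hubx⟩
      have hHH := hH1.trans hH2.symm
      have hker : ∀ w, ⟪ustar, w⟫ = (0:ℝ) → ⟪ub, w⟫ = (0:ℝ) := by
        intro w hw
        have hmem1 : x + w ∈ ({z | ⟪ustar, z⟫ = (-1:ℝ)} : Set (EuclideanSpace ℝ (Fin n))) := by
          simp only [mem_setOf_eq, inner_add_right, hsx, hw]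
          ring
        rw [hHH] at hmem1
        have h2 : ⟪ub, x + w⟫ = -1 := hmem1
        rw [inner_add_right, hubx] at h2
        linarith
      set β : ℝ := ⟪ustar, ub⟫ / ‖ustar‖ ^ 2 with hβdef
      have hustn : ‖ustar‖ ≠ 0 := norm_ne_zero_iff.2 hust0
      have hw1 : ⟪ustar, ub - β • ustar⟫ = (0:ℝ) := by
        rw [inner_sub_right, real_inner_smul_right, real_inner_self_eq_norm_sq, hβdef]
        field_simp
        ring
      have hw2 : ⟪ub, ub - β • ustar⟫ = (0:ℝ) := hker _ hw1
      have hw0 : ub - β • ustar = 0 := by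
        have h0 : ⟪ub - β • ustar, ub - β • ustar⟫ = (0:ℝ) := by
          rw [inner_sub_left, hw2, real_inner_smul_left, hw1]
          ring
        exact inner_self_eq_zero.1 h0
      have hubeq : ub = β • ustar := by rwa [sub_eq_zero] at hw0
      have hβ1 : β = 1 := by
        rw [hubeq, real_inner_smul_left, hsx] at hubx
        linarith
      rw [hβ1, one_smul] at hubeq
      rw [hubeq, sub_self, norm_zero] at hubgap
      linarith
    filter_upwards [hlow, Metric.ball_mem_nhds x hδ] with z hz1 hz2
    rw [Real.norm_eq_abs, abs_le]
    constructor
    · linarith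
    · have h1 := hupper z hz2
      have h2 : (0:ℝ) ≤ c * ‖z - x‖ := mul_nonneg hc.le (norm_nonneg _)
      linarith
  -- chain rule and conclusion
  have hFD : HasFDerivAt Fr (InnerProductSpace.toDual ℝ _ (-ustar)) x := hgrad.hasFDerivAt
  have hq : HasDerivAt (fun t : ℝ => (1/2 : ℝ) * t ^ 2) 1 (Fr x) := by
    have h := HasDerivAt.const_mul (1/2 : ℝ) (hasDerivAt_pow 2 (Fr x))
    refine h.congr_deriv ?_
    rw [hFrx]
    norm_num
  have hcomp := hq.comp_hasFDerivAt x hFD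
  rw [one_smul] at hcomp
  have hgrad2 : HasGradientAt (fun y => (1/2 : ℝ) * (Fr y) ^ 2) (-ustar) x :=
    hasGradientAt_iff_hasFDerivAt.2 hcomp
  have hgeq : gradient (fun y =>
      (1 / 2) * (-(supportFn (copolar K) y).toReal) ^ 2) x = -ustar :=
    hgrad2.gradient
  rw [hgeq, neg_neg]
  refine ⟨hxF, fun y hy => ?_, ?_⟩
  · rw [inner_sub_right, hsx]
    linarith [hsmem y hy]
  · rw [real_inner_comm]
    exact hsx
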